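/- (Corollary 2.6, periodic case) Assume G is conserved by X. If a differentiable curve x : ℝ → E solves the geometrically dissipated system and is periodic, i.e. there exists T > 0 with x(t + T) = x(t) for all t ∈ ℝ, then x(t) ∈ Inv for all t ∈ ℝ and x is also a solution of the unperturbed system, i.e. x′(t) = X(x(t)) for all t ∈ ℝ. -/

import Mathlib

open scoped RealInnerProductSpace BigOperators
open Filter Topology

/-- `Σ^{(a₁,…,a_r)}_{(b₁,…,b_s)}`: the `r × s` real matrix whose `(i,j)` entry is `⟪b j, a i⟫`. -/
noncomputable def sigmaMat {E : Type*} [NormedAddCommGroup E] [InnerProductSpace ℝ E]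
    {r s : ℕ} (a : Fin r → E) (b : Fin s → E) : Matrix (Fin r) (Fin s) ℝ :=
  Matrix.of fun i j => ⟪b j, a i⟫

/-- The standard control vector `v₀(w₁,…,w_{k+1},u)`: there are `k+1` vectors `w`
(`k+1 ≥ 1` encodes the requirement that the number of `w`-vectors is at least one).
With `0`-indexing, the sign `(-1)^(i+k+1)` below is the paper's `(-1)^{i+k+1}` for
`1`-indexed `i` and `k+1` vectors. -/
noncomputable def stdControl {E : Type*} [NormedAddCommGroup E] [InnerProductSpace ℝ E]
    {k : ℕ} (w : Fin (k + 1) → E) (u : E) : E :=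
  (∑ i : Fin (k + 1),
      ((-1 : ℝ) ^ ((i : ℕ) + k + 1) *
        (sigmaMat w (Fin.snoc (w ∘ i.succAbove) u)).det) • w i) +
    (sigmaMat w w).det • u

/-- The family of gradients `(∇F₁(x),…,∇F_{k+1}(x),∇G(x))`. -/
noncomputable def gradFam {E : Type*} [NormedAddCommGroup E] [InnerProductSpace ℝ E]
    [FiniteDimensional ℝ E] {k : ℕ} (F : Fin (k + 1) → E → ℝ) (G : E → ℝ) (x : E) :
    Fin (k + 1 + 1) → E :=
  Fin.snoc (fun i => gradient (F i) x) (gradient G x)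

/-- The standard control vector field `x ↦ v₀(∇F₁(x),…,∇F_{k+1}(x),∇G(x))`. -/
noncomputable def v0Field {E : Type*} [NormedAddCommGroup E] [InnerProductSpace ℝ E]
    [FiniteDimensional ℝ E] {k : ℕ} (F : Fin (k + 1) → E → ℝ) (G : E → ℝ) (x : E) : E :=
  stdControl (fun i => gradient (F i) x) (gradient G x)

/-- `det Σ^{(∇F₁(x),…,∇F_{k+1}(x),∇G(x))}_{(∇F₁(x),…,∇F_{k+1}(x),∇G(x))}`. -/
noncomputable def gramDetFG {E : Type*} [NormedAddCommGroup E] [InnerProductSpace ℝ E]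
    [FiniteDimensional ℝ E] {k : ℕ} (F : Fin (k + 1) → E → ℝ) (G : E → ℝ) (x : E) : ℝ :=
  (sigmaMat (gradFam F G x) (gradFam F G x)).det

/-- The set `Inv = {x | det Σ^{(∇F(x),∇G(x))}_{(∇F(x),∇G(x))} = 0}`. -/
def invSet {E : Type*} [NormedAddCommGroup E] [InnerProductSpace ℝ E]
    [FiniteDimensional ℝ E] {k : ℕ} (F : Fin (k + 1) → E → ℝ) (G : E → ℝ) : Set E :=
  {x | gramDetFG F G x = 0}

section Aux

variable {E : Type*} [NormedAddCommGroup E] [InnerProductSpace ℝ E]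

lemma snoc_comp_succAbove {k : ℕ} (w : Fin (k + 1) → E) (u : E) (i : Fin (k + 1)) :
    (Fin.snoc w u : Fin (k + 2) → E) ∘ (Fin.castSucc i).succAbove
      = Fin.snoc (w ∘ i.succAbove) u := by
  funext m
  refine Fin.lastCases ?_ (fun m' => ?_) m
  · have h1 : (Fin.castSucc i).succAbove (Fin.last k) = Fin.last (k + 1) :=
      Fin.succAbove_ne_last_last (by
        simp [Fin.ext_iff, Fin.castSucc]
        omega)
    simp [h1]
  · simp [Fin.castSucc_succAbove_castSucc]

/-- Cofactor expansion identity: inner product of any vector with the standard control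
vector is the determinant with that vector appended. -/
lemma inner_stdControl {k : ℕ} (w : Fin (k + 1) → E) (u a : E) :
    ⟪a, stdControl w u⟫ = (sigmaMat (Fin.snoc w a) (Fin.snoc w u)).det := by
  rw [Matrix.det_succ_row (sigmaMat (Fin.snoc w a) (Fin.snoc w u)) (Fin.last (k + 1))]
  rw [Fin.sum_univ_castSucc]
  have hsub : ∀ j : Fin (k + 2),
      (sigmaMat (Fin.snoc w a) (Fin.snoc w u)).submatrix
          (Fin.last (k + 1)).succAbove j.succAbove
        = sigmaMat w ((Fin.snoc w u : Fin (k + 2) → E) ∘ j.succAbove) := by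
    intro j
    ext i' j'
    simp [sigmaMat, Matrix.submatrix, Fin.succAbove_last]
  simp only [hsub]
  have hlastterm :
      ((-1 : ℝ) ^ ((Fin.last (k + 1) : ℕ) + ((Fin.last (k + 1)) : ℕ)) *
        sigmaMat (Fin.snoc w a) (Fin.snoc w u) (Fin.last (k + 1)) (Fin.last (k + 1)) *
        (sigmaMat w ((Fin.snoc w u : Fin (k + 2) → E) ∘ (Fin.last (k + 1)).succAbove)).det)
      = ⟪u, a⟫ * (sigmaMat w w).det := by
    have : (Fin.snoc w u : Fin (k + 2) → E) ∘ (Fin.last (k + 1)).succAbove = w := by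
      funext m; simp [Fin.succAbove_last]
    rw [this]
    have hsign : ((-1 : ℝ) ^ ((Fin.last (k + 1) : ℕ) + ((Fin.last (k + 1)) : ℕ))) = 1 := by
      rw [Fin.val_last]
      exact Even.neg_one_pow ⟨k + 1, by ring⟩
    rw [hsign]
    simp [sigmaMat]
  rw [hlastterm]
  unfold stdControl
  rw [inner_add_right, inner_sum, real_inner_smul_right]
  congr 1
  · refine Finset.sum_congr rfl fun i _ => ?_
    rw [real_inner_smul_right]
    have hcol : (Fin.snoc w u : Fin (k + 2) → E) ∘ (Fin.castSucc i).succAbove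
        = Fin.snoc (w ∘ i.succAbove) u := snoc_comp_succAbove w u i
    rw [hcol]
    have hentry : sigmaMat (Fin.snoc w a) (Fin.snoc w u) (Fin.last (k + 1)) (Fin.castSucc i)
        = ⟪w i, a⟫ := by simp [sigmaMat]
    rw [hentry]
    have hsign : ((-1 : ℝ) ^ ((Fin.last (k + 1) : ℕ) + ((Fin.castSucc i : Fin (k+2)) : ℕ)))
        = (-1 : ℝ) ^ ((i : ℕ) + k + 1) := by
      simp only [Fin.val_last, Fin.coe_castSucc]
      rw [show (k + 1) + (i : ℕ) = (i : ℕ) + k + 1 by omega]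
    rw [hsign, real_inner_comm a (w i)]
    ring
  · rw [real_inner_comm a u]; ring

lemma inner_w_stdControl {k : ℕ} (w : Fin (k + 1) → E) (u : E) (i : Fin (k + 1)) :
    ⟪w i, stdControl w u⟫ = 0 := by
  rw [inner_stdControl]
  refine Matrix.det_zero_of_row_eq (i := Fin.castSucc i) (j := Fin.last (k + 1))
    (Fin.ne_of_lt (Fin.castSucc_lt_last i)) ?_
  funext j
  simp [sigmaMat]

lemma stdControl_eq_zero {k : ℕ} (w : Fin (k + 1) → E) (u : E)
    (h : (sigmaMat (Fin.snoc w u) (Fin.snoc w u)).det = 0) : stdControl w u = 0 := by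
  have h2 : ⟪stdControl w u, stdControl w u⟫ = 0 := by
    nth_rewrite 1 [stdControl]
    rw [inner_add_left, sum_inner, real_inner_smul_left]
    have hu : ⟪u, stdControl w u⟫ = 0 := by rw [inner_stdControl, h]
    rw [hu]
    simp only [real_inner_smul_left, inner_w_stdControl]
    simp
  exact inner_self_eq_zero.mp h2

/-- Gram determinants are nonnegative. -/
lemma gram_det_nonneg [FiniteDimensional ℝ E] {m : ℕ} (v : Fin m → E) :
    0 ≤ (sigmaMat v v).det := by
  set n := Module.finrank ℝ E
  let b : OrthonormalBasis (Fin n) ℝ E := stdOrthonormalBasis ℝ E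
  let A : Matrix (Fin n) (Fin m) ℝ := Matrix.of fun p j => ⟪b p, v j⟫
  have hA : sigmaMat v v = A.conjTranspose * A := by
    ext i j
    simp only [Matrix.mul_apply, Matrix.conjTranspose_apply, A, Matrix.of_apply, sigmaMat,
      star_trivial]
    have := b.sum_inner_mul_inner (v i) (v j)
    calc ⟪v j, v i⟫ = ⟪v i, v j⟫ := real_inner_comm _ _
    _ = ∑ p, ⟪v i, b p⟫ * ⟪b p, v j⟫ := (b.sum_inner_mul_inner (v i) (v j)).symm
    _ = ∑ p, ⟪b p, v i⟫ * ⟪b p, v j⟫ := by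
        refine Finset.sum_congr rfl fun p _ => ?_
        rw [real_inner_comm (v i) (b p)]
  have hps : (A.conjTranspose * A).PosSemidef := Matrix.posSemidef_conjTranspose_mul_self A
  rw [hA, hps.isHermitian.det_eq_prod_eigenvalues]
  have : ∀ i, (0 : ℝ) ≤ hps.isHermitian.eigenvalues i := hps.eigenvalues_nonneg
  push_cast
  exact Finset.prod_nonneg fun i _ => this i

end Aux

/-- Corollary 2.6, periodic case: a periodic solution of the geometrically
dissipated system is contained in `Inv` and is also a solution of the unperturbed system. -/
theorem periodic_solution_mem_inv_and_unperturbed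
    {E : Type*} [NormedAddCommGroup E] [InnerProductSpace ℝ E]
    [FiniteDimensional ℝ E] {k : ℕ} (F : Fin (k + 1) → E → ℝ) (G : E → ℝ) (X : E → E)
    (hF : ∀ i, ContDiff ℝ 1 (F i)) (hG : ContDiff ℝ 1 G)
    (hcons : ∀ y : E, ⟪gradient G y, X y⟫ = 0)
    (x : ℝ → E) (hx : ∀ t : ℝ, HasDerivAt x (X (x t) - v0Field F G (x t)) t)
    (T : ℝ) (hT : 0 < T) (hper : ∀ t : ℝ, x (t + T) = x t) :
    (∀ t : ℝ, x t ∈ invSet F G) ∧ ∀ t : ℝ, HasDerivAt x (X (x t)) t := by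
  -- key pointwise identities
  have hinner : ∀ y : E, ⟪gradient G y, v0Field F G y⟫ = gramDetFG F G y := by
    intro y
    rw [v0Field, inner_stdControl]
    rfl
  have hnonneg : ∀ y : E, 0 ≤ gramDetFG F G y := fun y => gram_det_nonneg _
  -- derivative of g = G ∘ x
  set g : ℝ → ℝ := fun t => G (x t) with hg
  have hg' : ∀ t : ℝ, HasDerivAt g (-(gramDetFG F G (x t))) t := by
    intro t
    have hGd : HasGradientAt G (gradient G (x t)) (x t) :=
      ((hG.differentiable one_ne_zero) (x t)).hasGradientAt
    have hGf : HasFDerivAt G ((InnerProductSpace.toDual ℝ E) (gradient G (x t))) (x t) :=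
      hGd.hasFDerivAt
    have := hGf.comp_hasDerivAt t (hx t)
    have hval : (InnerProductSpace.toDual ℝ E) (gradient G (x t))
        (X (x t) - v0Field F G (x t)) = -(gramDetFG F G (x t)) := by
      simp only [InnerProductSpace.toDual_apply_apply]
      rw [inner_sub_right, hcons, hinner]
      ring
    rwa [hval] at this
  -- g is antitone
  have hdiff : Differentiable ℝ g := fun t => (hg' t).differentiableAt
  have hanti : Antitone g := by
    refine antitone_of_deriv_nonpos hdiff fun t => ?_
    rw [(hg' t).deriv]
    linarith [hnonneg (x t)]
  -- g is periodic, hence constant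
  have hgper : ∀ t : ℝ, g (t + T) = g t := fun t => by simp only [hg, hper]
  have hgnT : ∀ (n : ℕ) (t : ℝ), g (t + n * T) = g t := by
    intro n
    induction n with
    | zero => simp
    | succ n ih =>
      intro t
      have : t + (n + 1 : ℕ) * T = (t + T) + n * T := by push_cast; ring
      rw [this, ih, hgper]
  have hconst : ∀ s t : ℝ, g s = g t := by
    have key : ∀ s t : ℝ, s ≤ t → g s = g t := by
      intro s t hst
      obtain ⟨n, hn⟩ := exists_nat_ge ((t - s) / T)
      have hn' : t ≤ s + n * T := by
        have := (div_le_iff₀ hT).mp hn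
        linarith
      have h1 : g t ≤ g s := hanti hst
      have h2 : g (s + n * T) ≤ g t := hanti hn'
      have h3 : g (s + n * T) = g s := hgnT n s
      linarith
    intro s t
    rcases le_total s t with h | h
    · exact key s t h
    · exact (key t s h).symm
  -- hence g' = 0 everywhere
  have hzero : ∀ t : ℝ, gramDetFG F G (x t) = 0 := by
    intro t
    have hconstfun : g = fun _ => g 0 := funext fun s => hconst s 0
    have h0 : HasDerivAt g 0 t := by rw [hconstfun]; exact hasDerivAt_const t (g 0)
    have := (hg' t).unique h0
    linarith [this]
  refine ⟨fun t => hzero t, fun t => ?_⟩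
  have hv0 : v0Field F G (x t) = 0 := by
    apply stdControl_eq_zero
    exact hzero t
  have := hx t
  rwa [hv0, sub_zero] at this
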